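/- Every finite word u satisfies P(u) ≤ |u| + 1, where P(u) is the number of distinct palindromic factors of u (including the empty palindrome). -/

import Mathlib

/-- A suffix of a list, compared with another suffix of larger length, is its suffix. -/
lemma suffix_of_suffix_length_le' {A : Type*} {l₁ l₂ l : List A}
    (h1 : l₁ <:+ l) (h2 : l₂ <:+ l) (h : l₁.length ≤ l₂.length) : l₁ <:+ l₂ := by
  rw [← List.reverse_prefix] at h1 h2 ⊢
  exact List.prefix_of_prefix_length_le h1 h2 (by simpa using h)

/-- A palindromic suffix of a palindrome is also a prefix. -/
lemma pal_suffix_prefix {A : Type*} {p q : List A}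
    (hp : p.Palindrome) (hq : q.Palindrome) (h : p <:+ q) : p <+: q := by
  rw [← List.reverse_prefix, hp.reverse_eq, hq.reverse_eq] at h
  exact h

/-- The number of distinct palindromic factors of a finite word `u`
(including the empty word). -/
noncomputable def palCount {A : Type*} (u : List A) : ℕ :=
  Set.ncard {p : List A | p.Palindrome ∧ p <:+: u}

theorem palCount_le_length_succ {A : Type*} (u : List A) :
    palCount u ≤ u.length + 1 := by
  classical
  set n := u.length with hn
  set S : Set (List A) := {p : List A | p.Palindrome ∧ p <:+: u} with hS
  have hSfin : S.Finite := by
    apply (u.sublists.finite_toSet).subset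
    intro p hp
    exact List.mem_sublists.2 hp.2.sublist
  -- first-occurrence end position
  set f : List A → ℕ := fun p => sInf {k | p <:+ u.take k} with hf
  have hne : ∀ p : List A, p <:+: u → ∃ k ≤ n, p <:+ u.take k := by
    intro p hp
    obtain ⟨s, t, hst⟩ := hp
    refine ⟨s.length + p.length, ?_, ?_⟩
    · have : (s ++ p ++ t).length = n := by rw [hst]
      simp only [List.length_append] at this
      omega
    · rw [← hst, ← List.length_append, List.take_left]
      exact ⟨s, rfl⟩
  have hmem : ∀ p : List A, p <:+: u → p <:+ u.take (f p) := by
    intro p hp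
    obtain ⟨k, _, hk⟩ := hne p hp
    exact Nat.sInf_mem ⟨k, show k ∈ {k | p <:+ u.take k} from hk⟩
  have hle : ∀ p : List A, p <:+: u → f p ≤ n := by
    intro p hp
    obtain ⟨k, hk1, hk2⟩ := hne p hp
    exact le_trans (Nat.sInf_le hk2) hk1
  have hS' : S = insert [] (S \ {[]}) := by
    ext p
    simp only [Set.mem_insert_iff, Set.mem_diff, Set.mem_singleton_iff]
    constructor
    · intro h; by_cases hp : p = []
      · exact Or.inl hp
      · exact Or.inr ⟨h, hp⟩
    · rintro (rfl | ⟨h, _⟩)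
      · exact ⟨List.Palindrome.nil, List.nil_infix⟩
      · exact h
  have key : ∀ p q : List A, p.Palindrome → p <:+: u → p ≠ [] →
      q.Palindrome → q <:+: u → f p = f q → p ≠ q → p.length ≤ q.length → False := by
    intro p q hpal hpinf hpne hqal hqinf hfeq hne' hlen
    have hps : p <:+ u.take (f p) := hmem p hpinf
    have hqs : q <:+ u.take (f p) := hfeq ▸ hmem q hqinf
    have hpq : p <:+ q := suffix_of_suffix_length_le' hps hqs hlen
    have hlt : p.length < q.length := by
      rcases lt_or_eq_of_le hlen with h | h
      · exact h
      · exact absurd (hpq.eq_of_length h) hne'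
    have hpfx : p <+: q := pal_suffix_prefix hpal hqal hpq
    obtain ⟨r, hr⟩ := hpfx
    obtain ⟨s, hs⟩ := hqs
    -- u.take (f p) = s ++ p ++ r, so p <:+ u.take (s.length + p.length)
    have hkey : p <:+ u.take (s.length + p.length) := by
      have h1 : u.take (f p) = s ++ p ++ r := by rw [← hs, ← hr, List.append_assoc]
      have h2 : u.take (s.length + p.length) = s ++ p := by
        have : u.take (s.length + p.length) = (u.take (f p)).take (s.length + p.length) := by
          rw [List.take_take]
          congr 1
          have hl : (u.take (f p)).length = f p := by
            rw [List.length_take]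
            exact Nat.min_eq_left (le_trans (hle p hpinf) (le_refl n))
          have : s.length + p.length + r.length = f p := by
            have := congrArg List.length h1
            simp only [List.length_append] at this
            omega
          omega
        rw [this, h1, ← (List.length_append : (s ++ p).length = s.length + p.length), List.take_left]
      rw [h2]
      exact ⟨s, rfl⟩
    have hrlen : 0 < r.length := by
      have := congrArg List.length hr
      simp only [List.length_append] at this
      omega
    have hslt : s.length + p.length < f p := by
      have := congrArg List.length hs
      have hl : (u.take (f p)).length = f p := by
        rw [List.length_take]
        exact Nat.min_eq_left (hle p hpinf)
      have h1 := congrArg List.length hs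
      simp only [List.length_append, hl] at h1
      have h2 := congrArg List.length hr
      simp only [List.length_append] at h2
      omega
    exact absurd (Nat.sInf_le (show s.length + p.length ∈ {k | p <:+ u.take k} from hkey)) (not_le_of_gt hslt)
  have hInj : Set.InjOn f (S \ {[]}) := by
    rintro p ⟨⟨hpal, hpinf⟩, hpne⟩ q ⟨⟨hqal, hqinf⟩, hqne⟩ hfeq
    by_contra hne'
    rcases le_total p.length q.length with h | h
    · exact key p q hpal hpinf hpne hqal hqinf hfeq hne' h
    · exact key q p hqal hqinf hqne hpal hpinf hfeq.symm (Ne.symm hne') h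
  have hmaps : ∀ p ∈ S \ {[]}, f p ∈ ((Finset.Icc 1 n : Finset ℕ) : Set ℕ) := by
    rintro p ⟨⟨hpal, hpinf⟩, hpne⟩
    refine Set.mem_setOf_eq ▸ Finset.mem_coe.2 (Finset.mem_Icc.2 ⟨?_, hle p hpinf⟩)
    have hps := hmem p hpinf
    have h1 : p.length ≤ (u.take (f p)).length := hps.length_le
    have h2 : (u.take (f p)).length ≤ f p := by rw [List.length_take]; omega
    have h3 : 0 < p.length := List.length_pos_iff.2 hpne
    omega
  have hcard1 : (S \ {[]}).ncard ≤ n := by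
    have h1 := Set.ncard_le_ncard_of_injOn f hmaps hInj (Finset.Icc 1 n).finite_toSet
    rw [Set.ncard_coe_finset, Nat.card_Icc] at h1
    omega
  calc palCount u = S.ncard := rfl
    _ = (insert [] (S \ {[]})).ncard := by rw [← hS']
    _ ≤ (S \ {[]}).ncard + 1 := Set.ncard_insert_le _ _
    _ ≤ n + 1 := by omega
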